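/- Let $Q \in \mathbb{R}^{r\times r}$ and let $v_1,\dots,v_r \in \mathbb{R}^r$ be linearly independent vectors such that (1) $\|v_j\|_2 \le m$ for all $j$, (2) $\|Q v_j\|_2 \le q$ for all $j$, and (3) the absolute value of the determinant of the matrix with columns $v_1,\dots,v_r$ is at least $\tau > 0$. Then the spectral norm satisfies $\|Q\|_2 \le r \cdot \frac{\max\{m^r,1\}\cdot r!}{\tau} \cdot q$. -/

import Mathlib

open Finset

noncomputable def euclNorm {r : ℕ} (v : Fin r → ℝ) : ℝ := Real.sqrt (∑ i, v i ^ 2)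

lemma euclNorm_nonneg {r : ℕ} (v : Fin r → ℝ) : 0 ≤ euclNorm v := Real.sqrt_nonneg _

lemma euclNorm_eq_norm {r : ℕ} (v : Fin r → ℝ) :
    euclNorm v = ‖(WithLp.equiv 2 (Fin r → ℝ)).symm v‖ := by
  rw [EuclideanSpace.norm_eq]
  simp [euclNorm, Real.norm_eq_abs, sq_abs]

lemma abs_le_euclNorm {r : ℕ} (v : Fin r → ℝ) (i : Fin r) : |v i| ≤ euclNorm v := by
  have h : v i ^ 2 ≤ ∑ j, v j ^ 2 :=
    Finset.single_le_sum (fun j _ => sq_nonneg (v j)) (mem_univ i)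
  calc |v i| = Real.sqrt (v i ^ 2) := (Real.sqrt_sq_eq_abs _).symm
    _ ≤ _ := Real.sqrt_le_sqrt h

lemma euclNorm_sum_smul_le {r : ℕ} (c : Fin r → ℝ) (w : Fin r → Fin r → ℝ) :
    euclNorm (∑ j, c j • w j) ≤ ∑ j, |c j| * euclNorm (w j) := by
  rw [euclNorm_eq_norm]
  have : (WithLp.equiv 2 (Fin r → ℝ)).symm (∑ j, c j • w j) =
      ∑ j, c j • (WithLp.equiv 2 (Fin r → ℝ)).symm (w j) := by ext i; simp
  rw [this]
  calc ‖∑ j, c j • (WithLp.equiv 2 (Fin r → ℝ)).symm (w j)‖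
      ≤ ∑ j, ‖c j • (WithLp.equiv 2 (Fin r → ℝ)).symm (w j)‖ := norm_sum_le _ _
    _ = ∑ j, |c j| * euclNorm (w j) := by
        refine Finset.sum_congr rfl fun j _ => ?_
        rw [norm_smul, Real.norm_eq_abs, euclNorm_eq_norm]

lemma det_le_of_col_bound {r : ℕ} (M : Matrix (Fin r) (Fin r) ℝ) (b : Fin r → ℝ)
    (hb : ∀ i, 0 ≤ b i) (h : ∀ k i, |M k i| ≤ b i) :
    |M.det| ≤ (r.factorial : ℝ) * ∏ i, b i := by
  rw [Matrix.det_apply']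
  calc |∑ σ : Equiv.Perm (Fin r), ((Equiv.Perm.sign σ : ℤ) : ℝ) * ∏ i, M (σ i) i|
      ≤ ∑ σ : Equiv.Perm (Fin r), |((Equiv.Perm.sign σ : ℤ) : ℝ) * ∏ i, M (σ i) i| :=
        Finset.abs_sum_le_sum_abs _ _
    _ ≤ ∑ _σ : Equiv.Perm (Fin r), ∏ i, b i := by
        refine Finset.sum_le_sum fun σ _ => ?_
        have hs : |((Equiv.Perm.sign σ : ℤ) : ℝ)| = 1 := by
          rcases Int.units_eq_one_or (Equiv.Perm.sign σ) with h1 | h1 <;> simp [h1]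
        rw [abs_mul, hs, one_mul, Finset.abs_prod]
        exact Finset.prod_le_prod (fun i _ => abs_nonneg _) (fun i _ => h _ i)
    _ = (r.factorial : ℝ) * ∏ i, b i := by
        rw [Finset.sum_const, Finset.card_univ, Fintype.card_perm, Fintype.card_fin,
          nsmul_eq_mul]

theorem stmt1 {r : ℕ} (Q : Matrix (Fin r) (Fin r) ℝ) (v : Fin r → (Fin r → ℝ))
    (m q τ : ℝ) (hτ : 0 < τ)
    (hli : LinearIndependent ℝ v)
    (hm : ∀ j, euclNorm (v j) ≤ m)
    (hq : ∀ j, euclNorm (Q.mulVec (v j)) ≤ q)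
    (hdet : τ ≤ |(Matrix.of fun i j => v j i).det|) :
    ∀ x : Fin r → ℝ,
      euclNorm (Q.mulVec x) ≤
        ((r : ℝ) * (max (m ^ r) 1 * (r.factorial : ℝ) / τ) * q) * euclNorm x := by
  intro x
  rcases Nat.eq_zero_or_pos r with hr | hr
  · subst hr
    simp [euclNorm]
  -- r ≥ 1
  have j0 : Fin r := ⟨0, hr⟩
  have hm0 : 0 ≤ m := le_trans (euclNorm_nonneg _) (hm j0)
  have hq0 : 0 ≤ q := le_trans (euclNorm_nonneg _) (hq j0)
  set V : Matrix (Fin r) (Fin r) ℝ := Matrix.of fun i j => v j i with hV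
  have hdet0 : V.det ≠ 0 := by
    intro h
    rw [h] at hdet
    simp at hdet
    linarith
  set c : Fin r → ℝ := (V.det)⁻¹ • (Matrix.cramer V x) with hc
  have hxc : V.mulVec c = x := by
    rw [hc, Matrix.mulVec_smul, Matrix.mulVec_cramer, smul_smul,
      inv_mul_cancel₀ hdet0, one_smul]
  have hx_sum : x = ∑ j, c j • v j := by
    rw [← hxc]
    funext i
    rw [Matrix.mulVec, Finset.sum_apply]
    simp [dotProduct, V, mul_comm]
  -- bound on |c j|
  set B : ℝ := max (m ^ r) 1 * (r.factorial : ℝ) / τ * euclNorm x with hB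
  have hxnn := euclNorm_nonneg x
  have hmax : (0:ℝ) ≤ max (m ^ r) 1 := le_trans zero_le_one (le_max_right _ _)
  have hBnn : 0 ≤ B := by
    apply mul_nonneg _ hxnn
    apply div_nonneg (mul_nonneg hmax (Nat.cast_nonneg _)) hτ.le
  have hcj : ∀ j, |c j| ≤ B := by
    intro j
    have hcram : |Matrix.cramer V x j| ≤ (r.factorial : ℝ) * (max (m ^ r) 1 * euclNorm x) := by
      rw [Matrix.cramer_apply]
      have := det_le_of_col_bound (V.updateCol j x)
        (fun i => if i = j then euclNorm x else m)
        (fun i => by by_cases h : i = j <;> simp [h, hxnn, hm0])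
        (fun k i => by
          by_cases h : i = j <;>
            simp only [Matrix.updateCol_apply, h, if_true, if_false]
          · exact abs_le_euclNorm x k
          · exact le_trans (abs_le_euclNorm (v i) k) (hm i))
      refine le_trans this ?_
      have hprod : (∏ i, if i = j then euclNorm x else m) = euclNorm x * m ^ (r - 1) := by
        rw [← Finset.mul_prod_erase univ _ (mem_univ j)]
        simp only [if_pos rfl]
        congr 1
        rw [Finset.prod_congr rfl (fun i hi => by
          rw [if_neg (Finset.ne_of_mem_erase hi)]), Finset.prod_const,
          Finset.card_erase_of_mem (mem_univ j), Finset.card_univ, Fintype.card_fin]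
      rw [hprod]
      have hpow : m ^ (r - 1) ≤ max (m ^ r) 1 := by
        rcases le_total 1 m with h1 | h1
        · refine le_trans ?_ (le_max_left _ _)
          exact pow_le_pow_right₀ h1 (Nat.sub_le r 1)
        · refine le_trans ?_ (le_max_right _ _)
          exact pow_le_one₀ hm0 h1
      have : euclNorm x * m ^ (r - 1) ≤ max (m ^ r) 1 * euclNorm x := by
        rw [mul_comm]
        exact mul_le_mul_of_nonneg_right hpow hxnn
      nlinarith [Nat.cast_nonneg (α := ℝ) r.factorial]
    have habs : |c j| = |V.det|⁻¹ * |Matrix.cramer V x j| := by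
      rw [hc, Pi.smul_apply, smul_eq_mul, abs_mul, abs_inv]
    rw [habs, hB]
    have hinv : |V.det|⁻¹ ≤ τ⁻¹ := by
      apply inv_anti₀ hτ hdet
    calc |V.det|⁻¹ * |Matrix.cramer V x j|
        ≤ τ⁻¹ * ((r.factorial : ℝ) * (max (m ^ r) 1 * euclNorm x)) := by
          apply mul_le_mul hinv hcram (abs_nonneg _) (by positivity)
      _ = max (m ^ r) 1 * (r.factorial : ℝ) / τ * euclNorm x := by
          field_simp
  -- main chain
  have hQx : Q.mulVec x = ∑ j, c j • Q.mulVec (v j) := by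
    rw [hx_sum]
    rw [show (Q.mulVec (∑ j, c j • v j)) = Q.mulVecLin (∑ j, c j • v j) from rfl]
    rw [map_sum]
    simp [Matrix.mulVecLin_apply]
  calc euclNorm (Q.mulVec x) = euclNorm (∑ j, c j • Q.mulVec (v j)) := by rw [hQx]
    _ ≤ ∑ j, |c j| * euclNorm (Q.mulVec (v j)) := euclNorm_sum_smul_le _ _
    _ ≤ ∑ _j : Fin r, B * q := by
        refine Finset.sum_le_sum fun j _ => ?_
        exact mul_le_mul (hcj j) (hq j) (euclNorm_nonneg _) hBnn
    _ = (r : ℝ) * (B * q) := by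
        rw [Finset.sum_const, Finset.card_univ, Fintype.card_fin, nsmul_eq_mul]
    _ = ((r : ℝ) * (max (m ^ r) 1 * (r.factorial : ℝ) / τ) * q) * euclNorm x := by
        rw [hB]; ring
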